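/- Let R ⊆ S be an extension of commutative rings. If there exists a surjective R-linear map from R^n onto S^n (where S^n is viewed as an R-module via restriction of scalars) for some natural number n ≥ 1, then R = S. -/

import Mathlib

/-- Let `R ⊆ S` be an extension of commutative rings.  If there is a
surjective `R`-linear map `R^n → S^n` (with `S^n` viewed as an `R`-module by restriction
of scalars) for some `n ≥ 1`, then `R = S`, i.e. the inclusion `R → S` is surjective. -/
theorem stmt_1 {R S : Type*} [CommRing R] [CommRing S] [Algebra R S]
    (hinj : Function.Injective (algebraMap R S))
    (n : ℕ) (hn : 1 ≤ n) (f : (Fin n → R) →ₗ[R] (Fin n → S))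
    (hf : Function.Surjective f) :
    Function.Surjective (algebraMap R S) := by
  set v : Fin n → (Fin n → S) := fun i => f (Pi.basisFun R (Fin n) i) with hv
  have hspanR : Submodule.span R (Set.range v) = ⊤ := by
    show Submodule.span R (Set.range (⇑f ∘ ⇑(Pi.basisFun R (Fin n)))) = ⊤
    rw [Set.range_comp, Submodule.span_image, (Pi.basisFun R (Fin n)).span_eq,
      Submodule.map_top, LinearMap.range_eq_top.mpr hf]
  have hspanS : Submodule.span S (Set.range v) = ⊤ := by
    rw [eq_top_iff]
    intro x _
    have hx : x ∈ Submodule.span R (Set.range v) := by rw [hspanR]; trivial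
    exact Submodule.span_le_restrictScalars R S (Set.range v) hx
  -- the S-linear endomorphism sending the standard basis to `v`
  set g : (Fin n → S) →ₗ[S] (Fin n → S) := (Pi.basisFun S (Fin n)).constr S v with hg
  have hgv : ∀ i, g (Pi.basisFun S (Fin n) i) = v i := fun i =>
    (Pi.basisFun S (Fin n)).constr_basis S v i
  have hgsurj : Function.Surjective g := by
    rw [← LinearMap.range_eq_top, eq_top_iff, ← hspanS, Submodule.span_le]
    rintro _ ⟨i, rfl⟩
    exact ⟨Pi.basisFun S (Fin n) i, hgv i⟩
  have hginj : Function.Injective g :=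
    OrzechProperty.injective_of_surjective_endomorphism g hgsurj
  let e : (Fin n → S) ≃ₗ[S] (Fin n → S) := LinearEquiv.ofBijective g ⟨hginj, hgsurj⟩
  let B : Module.Basis (Fin n) S (Fin n → S) := (Pi.basisFun S (Fin n)).map e
  have hB : ∀ i, B i = v i := fun i => hgv i
  intro s
  set i0 : Fin n := ⟨0, hn⟩
  have hmem : s • v i0 ∈ Submodule.span R (Set.range v) := by rw [hspanR]; trivial
  rw [Submodule.mem_span_range_iff_exists_fun] at hmem
  obtain ⟨c, hc⟩ := hmem
  refine ⟨c i0, ?_⟩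
  have hc' : ∑ j, algebraMap R S (c j) • B j = s • B i0 := by
    rw [hB]
    rw [← hc]
    exact Finset.sum_congr rfl fun j _ => by rw [hB, algebraMap_smul]
  have h1 : (B.repr (s • B i0)) i0 = s := by
    simp [Module.Basis.repr_self]
  have h2 : (B.repr (∑ j, algebraMap R S (c j) • B j)) i0 = algebraMap R S (c i0) := by
    simp only [map_sum, map_smul, Module.Basis.repr_self, Finsupp.coe_finset_sum, Finset.sum_apply,
      Finsupp.smul_apply, Finsupp.single_apply, smul_eq_mul, mul_ite, mul_one, mul_zero,
      Finset.sum_ite_eq', Finset.mem_univ, if_true]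
  rw [← h2, hc', h1]
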